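/- The uniform distribution on ranked oriented trees with n leaves and the uniform distribution on ranked phylogenetic trees with n leaves induce the same probability distribution on ranked tree shapes with n leaves under the respective forgetful maps. -/

import Mathlib

/-- A rooted binary tree with ordered (left/right) children. -/
inductive OTree : Type
  | leaf : OTree
  | node : OTree → OTree → OTree
deriving DecidableEq

/-- Number of leaves. -/
def OTree.nLeaves : OTree → ℕ
  | .leaf => 1
  | .node l r => l.nLeaves + r.nLeaves

/-- Number of internal nodes. -/
def OTree.nInt : OTree → ℕ
  | .leaf => 0
  | .node l r => l.nInt + r.nInt + 1

/-- `t.isInt p` : the path `p` (`true` = left) leads to an internal node of `t`. -/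
def OTree.isInt : OTree → List Bool → Prop
  | .leaf, _ => False
  | .node _ _, [] => True
  | .node l _, true :: p => l.isInt p
  | .node _ r, false :: p => r.isInt p

/-- `t.isLf p` : the path `p` leads to a leaf of `t`. -/
def OTree.isLf : OTree → List Bool → Prop
  | .leaf, [] => True
  | .leaf, _ :: _ => False
  | .node _ _, [] => False
  | .node l _, true :: p => l.isLf p
  | .node _ r, false :: p => r.isLf p

/-- A ranking of the internal nodes of `t`: a bijection to `{1,…,n-1}` (here `Fin t.nInt`)
which strictly increases along every root-to-leaf path. -/
structure Ranking (t : OTree) where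
  rk : {p : List Bool // t.isInt p} → Fin t.nInt
  bij : Function.Bijective rk
  mono : ∀ p q : {p : List Bool // t.isInt p}, p.1 <+: q.1 → p.1 ≠ q.1 → rk p < rk q

/-- A ranked oriented tree. -/
def RankedOTree := Σ t : OTree, Ranking t

/-- Reorient a tree by swapping the two children at every position `p` with `σ p = true`. -/
def OTree.reorient (σ : List Bool → Bool) : OTree → OTree
  | .leaf => .leaf
  | .node l r =>
    let l' := l.reorient (fun p => σ (true :: p))
    let r' := r.reorient (fun p => σ (false :: p))
    if σ [] then .node r' l' else .node l' r'

/-- The induced map on paths: position `p` of `t` corresponds to `pmap σ p` of `t.reorient σ`. -/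
def pmap (σ : List Bool → Bool) : List Bool → List Bool
  | [] => []
  | b :: p => (xor b (σ [])) :: pmap (fun q => σ (b :: q)) p

/-- Two ranked oriented trees have the same ranked tree shape: some reorientation sends one to
the other, matching ranks. -/
def ShapeRel (x y : RankedOTree) : Prop :=
  ∃ σ : List Bool → Bool, y.1 = x.1.reorient σ ∧
    ∀ (p : {p : List Bool // x.1.isInt p}) (h : y.1.isInt (pmap σ p.1)),
      (y.2.rk ⟨pmap σ p.1, h⟩ : ℕ) = (x.2.rk p : ℕ)

/-- A ranked phylogenetic tree, presented as an oriented representative: a ranked oriented tree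
together with distinct leaf labels (a bijection from leaf positions to `Fin n`). -/
structure PhyloT where
  tree : OTree
  rank : Ranking tree
  lab : {p : List Bool // tree.isLf p} ≃ Fin tree.nLeaves

/-- Two labeled ranked oriented trees represent the same ranked phylogenetic tree:
some reorientation matches them, preserving ranks and leaf labels. -/
def PhyloRel (x y : PhyloT) : Prop :=
  ∃ σ : List Bool → Bool, y.tree = x.tree.reorient σ ∧
    (∀ (p : {p : List Bool // x.tree.isInt p}) (h : y.tree.isInt (pmap σ p.1)),
      (y.rank.rk ⟨pmap σ p.1, h⟩ : ℕ) = (x.rank.rk p : ℕ)) ∧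
    (∀ (p : {p : List Bool // x.tree.isLf p}) (h : y.tree.isLf (pmap σ p.1)),
      (y.lab ⟨pmap σ p.1, h⟩ : ℕ) = (x.lab p : ℕ))

/-- Ranked phylogenetic trees: labeled oriented representatives up to reorientation. -/
def PhyloTree := Quotient (Relation.EqvGen.setoid PhyloRel)

namespace OTree

theorem nLeaves_pos (t : OTree) : 1 ≤ t.nLeaves := by
  induction t with
  | leaf => exact le_refl _
  | node l r hl hr => simp only [nLeaves]; omega

theorem reorient_nLeaves (σ : List Bool → Bool) (t : OTree) :
    (t.reorient σ).nLeaves = t.nLeaves := by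
  induction t generalizing σ with
  | leaf => rfl
  | node l r hl hr =>
    simp only [reorient, nLeaves]
    split <;> simp [nLeaves, hl, hr] <;> omega

theorem reorient_nInt (σ : List Bool → Bool) (t : OTree) :
    (t.reorient σ).nInt = t.nInt := by
  induction t generalizing σ with
  | leaf => rfl
  | node l r hl hr =>
    simp only [reorient, nInt]
    split <;> simp [nInt, hl, hr] <;> omega

theorem reorient_const_false (t : OTree) : t.reorient (fun _ => false) = t := by
  induction t with
  | leaf => rfl
  | node l r hl hr => simp [reorient, hl, hr]

end OTree

theorem pmap_const_false (p : List Bool) : pmap (fun _ => false) p = p := by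
  induction p with
  | nil => rfl
  | cons b p ih => simp [pmap, ih]

/-- Composition of reorientations. -/
def rcomp (σ τ : List Bool → Bool) : List Bool → Bool := fun p => xor (σ p) (τ (pmap σ p))

theorem pmap_pmap (σ τ : List Bool → Bool) (p : List Bool) :
    pmap τ (pmap σ p) = pmap (rcomp σ τ) p := by
  induction p generalizing σ τ with
  | nil => rfl
  | cons b p ih =>
    simp only [pmap, rcomp, List.cons.injEq]
    constructor
    · cases b <;> cases σ [] <;> cases τ [] <;> rfl
    · rw [ih]
      congr 1

theorem reorient_rcomp (σ τ : List Bool → Bool) (t : OTree) :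
    (t.reorient σ).reorient τ = t.reorient (rcomp σ τ) := by
  induction t generalizing σ τ with
  | leaf => rfl
  | node l r hl hr =>
    simp only [OTree.reorient, rcomp, pmap]
    rcases Bool.eq_false_or_eq_true (σ []) with hσ | hσ <;>
      rcases Bool.eq_false_or_eq_true (τ []) with hτ | hτ <;>
      simp only [OTree.reorient, hσ, hτ, if_true, if_false, Bool.xor_false, Bool.xor_true,
        Bool.not_false, Bool.not_true, if_true, if_false, Bool.false_eq_true] <;>
    · rw [hl, hr]
      constructor <;> · congr 1; funext q; simp [rcomp, hσ, pmap]

/-- Inverse of the path map. -/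
def pmapInv (σ : List Bool → Bool) : List Bool → List Bool
  | [] => []
  | b :: q => (xor b (σ [])) :: pmapInv (fun p => σ ((xor b (σ [])) :: p)) q

theorem pmapInv_pmap (σ : List Bool → Bool) (p : List Bool) :
    pmapInv σ (pmap σ p) = p := by
  induction p generalizing σ with
  | nil => rfl
  | cons b p ih =>
    simp only [pmap, pmapInv, List.cons.injEq]
    refine ⟨by cases b <;> cases σ [] <;> rfl, ?_⟩
    have : (fun q => σ ((xor (xor b (σ [])) (σ [])) :: q)) = (fun q => σ (b :: q)) := by
      cases b <;> cases hσ : σ [] <;> simp [hσ]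
    rw [this, ih]

theorem pmap_pmapInv (σ : List Bool → Bool) (q : List Bool) :
    pmap σ (pmapInv σ q) = q := by
  induction q generalizing σ with
  | nil => rfl
  | cons b q ih =>
    simp only [pmap, pmapInv, List.cons.injEq]
    refine ⟨by cases b <;> cases σ [] <;> rfl, ?_⟩
    exact ih _

/-- Inverse reorientation. -/
def sinv (σ : List Bool → Bool) : List Bool → Bool := fun q => σ (pmapInv σ q)

theorem rcomp_sinv (σ : List Bool → Bool) : rcomp σ (sinv σ) = fun _ => false := by
  funext p
  simp [rcomp, sinv, pmapInv_pmap]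

theorem pmap_sinv_pmap (σ : List Bool → Bool) (p : List Bool) :
    pmap (sinv σ) (pmap σ p) = p := by
  rw [pmap_pmap, rcomp_sinv, pmap_const_false]

theorem pmap_sinv (σ : List Bool → Bool) (q : List Bool) :
    pmap (sinv σ) q = pmapInv σ q := by
  conv_lhs => rw [← pmap_pmapInv σ q]
  rw [pmap_sinv_pmap, ← pmap_pmapInv σ q, pmapInv_pmap]

theorem reorient_sinv_reorient (σ : List Bool → Bool) (t : OTree) :
    (t.reorient σ).reorient (sinv σ) = t := by
  rw [reorient_rcomp, rcomp_sinv, OTree.reorient_const_false]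

theorem pmap_length (σ : List Bool → Bool) (p : List Bool) :
    (pmap σ p).length = p.length := by
  induction p generalizing σ with
  | nil => rfl
  | cons b p ih => simp [pmap, ih]

theorem pmap_injective (σ : List Bool → Bool) : Function.Injective (pmap σ) :=
  Function.LeftInverse.injective (pmapInv_pmap σ)

theorem pmap_append (σ : List Bool → Bool) (p q : List Bool) :
    pmap σ (p ++ q) = pmap σ p ++ pmap (fun r => σ (p ++ r)) q := by
  induction p generalizing σ with
  | nil => rfl
  | cons b p ih => simp [pmap, ih]

theorem pmap_prefix (σ : List Bool → Bool) {p q : List Bool} (h : p <+: q) :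
    pmap σ p <+: pmap σ q := by
  obtain ⟨r, rfl⟩ := h
  rw [pmap_append]
  exact ⟨_, rfl⟩

theorem isInt_reorient (σ : List Bool → Bool) (t : OTree) (p : List Bool) :
    (t.reorient σ).isInt (pmap σ p) ↔ t.isInt p := by
  induction t generalizing σ p with
  | leaf =>
    constructor
    · intro h; exact absurd h (by simp [OTree.reorient, OTree.isInt])
    · intro h; exact absurd h (by simp [OTree.isInt])
  | node l r ihl ihr =>
    cases p with
    | nil =>
      simp only [pmap, OTree.reorient]
      split <;> simp [OTree.isInt]
    | cons b p =>
      simp only [pmap, OTree.reorient]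
      rcases hσ : σ [] with _ | _ <;> cases b <;>
        simp only [Bool.xor_false, Bool.xor_true, Bool.not_true, Bool.not_false,
          if_true, if_false, OTree.isInt] <;>
        first
          | exact ihl _ _
          | exact ihr _ _

theorem isLf_reorient (σ : List Bool → Bool) (t : OTree) (p : List Bool) :
    (t.reorient σ).isLf (pmap σ p) ↔ t.isLf p := by
  induction t generalizing σ p with
  | leaf =>
    cases p with
    | nil => simp [OTree.reorient, pmap]
    | cons b p => simp [OTree.reorient, pmap, OTree.isLf]
  | node l r ihl ihr =>
    cases p with
    | nil =>
      simp only [pmap, OTree.reorient]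
      split <;> simp [OTree.isLf]
    | cons b p =>
      simp only [pmap, OTree.reorient]
      rcases hσ : σ [] with _ | _ <;> cases b <;>
        simp only [Bool.xor_false, Bool.xor_true, Bool.not_true, Bool.not_false,
          if_true, if_false, OTree.isLf] <;>
        first
          | exact ihl _ _
          | exact ihr _ _

theorem isInt_of_prefix_isInt {t : OTree} {p q : List Bool} (hq : t.isInt q)
    (hpq : p <+: q) (hne : p ≠ q) : t.isInt p := by
  induction t generalizing p q with
  | leaf => exact absurd hq (by simp [OTree.isInt])
  | node l r ihl ihr =>
    cases p with
    | nil => trivial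
    | cons b p =>
      cases q with
      | nil => exact absurd (List.prefix_nil.mp hpq) (by simp)
      | cons c q =>
        obtain ⟨hbc, hpq'⟩ := List.cons_prefix_cons.mp hpq
        subst hbc
        have hne' : p ≠ q := fun h => hne (by rw [h])
        cases b with
        | true => exact ihl hq hpq' hne'
        | false => exact ihr hq hpq' hne'

theorem isInt_of_prefix_isLf {t : OTree} {p q : List Bool} (hq : t.isLf q)
    (hpq : p <+: q) (hne : p ≠ q) : t.isInt p := by
  induction t generalizing p q with
  | leaf =>
    cases q with
    | nil => exact absurd (List.prefix_nil.mp hpq) hne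
    | cons c q => exact absurd hq (by simp [OTree.isLf])
  | node l r ihl ihr =>
    cases p with
    | nil => trivial
    | cons b p =>
      cases q with
      | nil => exact absurd (List.prefix_nil.mp hpq) (by simp)
      | cons c q =>
        obtain ⟨hbc, hpq'⟩ := List.cons_prefix_cons.mp hpq
        subst hbc
        have hne' : p ≠ q := fun h => hne (by rw [h])
        cases b with
        | true => exact ihl hq hpq' hne'
        | false => exact ihr hq hpq' hne'

/-- A leaf path strictly extending any internal position. -/
theorem exists_isLf_extend {t : OTree} {q : List Bool} (hq : t.isInt q) :
    ∃ p, t.isLf p ∧ q <+: p ∧ q ≠ p := by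
  induction t generalizing q with
  | leaf => exact absurd hq (by simp [OTree.isInt])
  | node l r ihl ihr =>
    cases q with
    | nil =>
      -- find any leaf path in l
      have : ∀ s : OTree, ∃ p, s.isLf p := by
        intro s
        induction s with
        | leaf => exact ⟨[], trivial⟩
        | node a b iha ihb =>
          obtain ⟨p, hp⟩ := iha
          exact ⟨true :: p, hp⟩
      obtain ⟨p, hp⟩ := this l
      exact ⟨true :: p, hp, List.nil_prefix, by simp⟩
    | cons b q =>
      cases b with
      | true =>
        obtain ⟨p, hp, hpre, hne⟩ := ihl hq
        exact ⟨true :: p, hp, List.cons_prefix_cons.mpr ⟨rfl, hpre⟩,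
          fun h => hne (by injection h)⟩
      | false =>
        obtain ⟨p, hp, hpre, hne⟩ := ihr hq
        exact ⟨false :: p, hp, List.cons_prefix_cons.mpr ⟨rfl, hpre⟩,
          fun h => hne (by injection h)⟩

/-- `pmap` only depends on the values of `σ` at proper prefixes. -/
theorem pmap_congr {σ τ : List Bool → Bool} {p : List Bool}
    (h : ∀ q, q <+: p → q ≠ p → σ q = τ q) : pmap σ p = pmap τ p := by
  induction p generalizing σ τ with
  | nil => rfl
  | cons b p ih =>
    have h0 : σ [] = τ [] := h [] List.nil_prefix (by simp)
    simp only [pmap, h0, List.cons.injEq, true_and]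
    refine ih fun q hq hne => ?_
    exact h (b :: q) (List.cons_prefix_cons.mpr ⟨rfl, hq⟩) (fun h' => hne (by injection h'))

/-- `reorient` only depends on the values of `σ` at internal positions. -/
theorem reorient_congr {t : OTree} {σ τ : List Bool → Bool}
    (h : ∀ p, t.isInt p → σ p = τ p) : t.reorient σ = t.reorient τ := by
  induction t generalizing σ τ with
  | leaf => rfl
  | node l r ihl ihr =>
    have h0 : σ [] = τ [] := h [] trivial
    simp only [OTree.reorient, h0]
    rw [ihl (fun p hp => h (true :: p) hp), ihr (fun p hp => h (false :: p) hp)]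

/-- Values of `pmap` determine `σ` on proper prefixes. -/
theorem eq_of_pmap_eq {σ τ : List Bool → Bool} {p q : List Bool}
    (h : pmap σ p = pmap τ p) (hq : q <+: p) (hne : q ≠ p) : σ q = τ q := by
  induction p generalizing σ τ q with
  | nil => exact absurd (List.prefix_nil.mp hq) hne
  | cons b p ih =>
    simp only [pmap, List.cons.injEq] at h
    have h0 : σ [] = τ [] := by
      have := h.1
      cases b <;> cases hσ : σ [] <;> cases hτ : τ [] <;> simp_all
    cases q with
    | nil => exact h0
    | cons c q =>
      obtain ⟨rfl, hq'⟩ := List.cons_prefix_cons.mp hq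
      have : (fun r => σ (c :: r)) q = (fun r => τ (c :: r)) q :=
        ih (σ := fun r => σ (c :: r)) (τ := fun r => τ (c :: r)) h.2 hq'
          (fun h' => hne (by rw [h']))
      exact this

def lfLeafEquiv : {p : List Bool // OTree.leaf.isLf p} ≃ Fin 1 where
  toFun := fun _ => 0
  invFun := fun _ => ⟨[], trivial⟩
  left_inv := by
    rintro ⟨p, h⟩
    cases p with
    | nil => rfl
    | cons b p => exact absurd h (by simp [OTree.isLf])
  right_inv := fun i => by omega

def lfNodeEquiv (l r : OTree) :
    {p : List Bool // (OTree.node l r).isLf p} ≃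
      {p : List Bool // l.isLf p} ⊕ {p : List Bool // r.isLf p} where
  toFun := fun x => match x with
    | ⟨[], h⟩ => False.elim h
    | ⟨true :: p, h⟩ => Sum.inl ⟨p, h⟩
    | ⟨false :: p, h⟩ => Sum.inr ⟨p, h⟩
  invFun := fun x => match x with
    | Sum.inl ⟨p, h⟩ => ⟨true :: p, h⟩
    | Sum.inr ⟨p, h⟩ => ⟨false :: p, h⟩
  left_inv := by rintro ⟨_ | ⟨_ | _, p⟩, h⟩ <;> first | exact False.elim h | rfl
  right_inv := by rintro (⟨p, h⟩ | ⟨p, h⟩) <;> rfl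

def intNodeEquiv (l r : OTree) :
    {p : List Bool // (OTree.node l r).isInt p} ≃
      ({p : List Bool // l.isInt p} ⊕ {p : List Bool // r.isInt p}) ⊕ Fin 1 where
  toFun := fun x => match x with
    | ⟨[], _⟩ => Sum.inr 0
    | ⟨true :: p, h⟩ => Sum.inl (Sum.inl ⟨p, h⟩)
    | ⟨false :: p, h⟩ => Sum.inl (Sum.inr ⟨p, h⟩)
  invFun := fun x => match x with
    | Sum.inl (Sum.inl ⟨p, h⟩) => ⟨true :: p, h⟩
    | Sum.inl (Sum.inr ⟨p, h⟩) => ⟨false :: p, h⟩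
    | Sum.inr _ => ⟨[], trivial⟩
  left_inv := by rintro ⟨_ | ⟨_ | _, p⟩, h⟩ <;> rfl
  right_inv := by rintro ((⟨p, h⟩ | ⟨p, h⟩) | i) <;> first | rfl | (simp; omega)

theorem nonempty_lf_equiv (t : OTree) :
    Nonempty ({p : List Bool // t.isLf p} ≃ Fin t.nLeaves) := by
  induction t with
  | leaf => exact ⟨lfLeafEquiv⟩
  | node l r ihl ihr =>
    obtain ⟨el⟩ := ihl
    obtain ⟨er⟩ := ihr
    exact ⟨(lfNodeEquiv l r).trans ((el.sumCongr er).trans finSumFinEquiv)⟩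

theorem nonempty_int_equiv (t : OTree) :
    Nonempty ({p : List Bool // t.isInt p} ≃ Fin t.nInt) := by
  induction t with
  | leaf =>
    have h1 : IsEmpty {p : List Bool // OTree.leaf.isInt p} := ⟨fun x => x.2⟩
    have h2 : IsEmpty (Fin OTree.leaf.nInt) := ⟨fun x => absurd x.2 (by simp [OTree.nInt])⟩
    exact ⟨Equiv.equivOfIsEmpty _ _⟩
  | node l r ihl ihr =>
    obtain ⟨el⟩ := ihl
    obtain ⟨er⟩ := ihr
    exact ⟨(intNodeEquiv l r).trans
      ((((el.sumCongr er).trans finSumFinEquiv).sumCongr (Equiv.refl (Fin 1))).trans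
        finSumFinEquiv)⟩

instance (t : OTree) : Finite {p : List Bool // t.isLf p} :=
  Finite.of_equiv _ (nonempty_lf_equiv t).some.symm

instance (t : OTree) : Finite {p : List Bool // t.isInt p} :=
  Finite.of_equiv _ (nonempty_int_equiv t).some.symm

theorem card_lf (t : OTree) : Nat.card {p : List Bool // t.isLf p} = t.nLeaves := by
  obtain ⟨e⟩ := nonempty_lf_equiv t
  rw [Nat.card_congr e, Nat.card_eq_fintype_card, Fintype.card_fin]

theorem card_int (t : OTree) : Nat.card {p : List Bool // t.isInt p} = t.nInt := by
  obtain ⟨e⟩ := nonempty_int_equiv t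
  rw [Nat.card_congr e, Nat.card_eq_fintype_card, Fintype.card_fin]

theorem nLeaves_eq_nInt_add_one (t : OTree) : t.nLeaves = t.nInt + 1 := by
  induction t with
  | leaf => rfl
  | node l r ihl ihr => simp only [OTree.nLeaves, OTree.nInt, ihl, ihr]; omega







theorem Ranking.ext' {t : OTree} {a b : Ranking t} (h : a.rk = b.rk) : a = b := by
  cases a; cases b; simp_all

instance (t : OTree) : Finite (Ranking t) := by
  have : Function.Injective (fun a : Ranking t => a.rk) := fun a b h => Ranking.ext' h
  exact Finite.of_injective _ this

theorem OTree.ext_isInt : ∀ {t s : OTree}, (∀ p, t.isInt p ↔ s.isInt p) → t = s := by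
  intro t
  induction t with
  | leaf =>
    intro s h
    cases s with
    | leaf => rfl
    | node a b => exact absurd ((h []).mpr trivial) (by simp [OTree.isInt])
  | node l r ihl ihr =>
    intro s h
    cases s with
    | leaf => exact absurd ((h []).mp trivial) (by simp [OTree.isInt])
    | node a b =>
      rw [ihl (s := a) fun p => h (true :: p), ihr (s := b) fun p => h (false :: p)]

theorem isInt_length {t : OTree} {p : List Bool} (h : t.isInt p) :
    p.length + 2 ≤ t.nLeaves := by
  induction t generalizing p with
  | leaf => exact absurd h (by simp [OTree.isInt])
  | node l r ihl ihr =>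
    cases p with
    | nil =>
      have := l.nLeaves_pos; have := r.nLeaves_pos
      simp only [OTree.nLeaves, List.length_nil]; omega
    | cons b p =>
      cases b with
      | true =>
        have := ihl h; have := r.nLeaves_pos
        simp only [OTree.nLeaves, List.length_cons]; omega
      | false =>
        have := ihr h; have := l.nLeaves_pos
        simp only [OTree.nLeaves, List.length_cons]; omega

instance finiteShortLists (n : ℕ) : Finite {l : List Bool // l.length < n} := by
  have : Function.Injective
      (fun l : {l : List Bool // l.length < n} =>
        ((⟨l.1.length, l.2⟩ : Fin n), fun i : Fin n => l.1.getD i false)) := by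
    rintro ⟨l, hl⟩ ⟨m, hm⟩ h
    simp only [Prod.mk.injEq, Fin.mk.injEq] at h
    obtain ⟨hlen, hget⟩ := h
    refine Subtype.ext (List.ext_getElem hlen fun i h1 h2 => ?_)
    have := congrFun hget ⟨i, lt_trans h1 hl⟩
    rw [← List.getD_eq_getElem l false h1, ← List.getD_eq_getElem m false h2]
    exact this
  exact Finite.of_injective _ this

instance finiteTrees (n : ℕ) : Finite {t : OTree // t.nLeaves = n} := by
  have : Function.Injective
      (fun t : {t : OTree // t.nLeaves = n} =>
        (fun l : {l : List Bool // l.length < n} => t.1.isInt l.1)) := by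
    rintro ⟨t, ht⟩ ⟨s, hs⟩ h
    refine Subtype.ext (OTree.ext_isInt fun p => ?_)
    by_cases hp : p.length < n
    · exact iff_of_eq (congrFun h ⟨p, hp⟩)
    · constructor
      · intro hi
        have h2 : p.length + 2 ≤ t.nLeaves := isInt_length hi
        omega
      · intro hi
        have h2 : p.length + 2 ≤ s.nLeaves := isInt_length hi
        omega
  exact Finite.of_injective _ this

/-- `RankedOTree`s with a given underlying-tree predicate form a sigma type. -/
def rankedSigmaEquiv (P : OTree → Prop) :
    {y : RankedOTree // P y.1} ≃ Σ t : {t : OTree // P t}, Ranking t where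
  toFun := fun y => ⟨⟨y.1.1, y.2⟩, y.1.2⟩
  invFun := fun x => ⟨⟨x.1.1, x.2⟩, x.1.2⟩
  left_inv := by rintro ⟨⟨t, r⟩, h⟩; rfl
  right_inv := by rintro ⟨⟨t, h⟩, r⟩; rfl

instance finiteRanked (n : ℕ) : Finite {y : RankedOTree // y.1.nLeaves = n} :=
  Finite.of_equiv _ (rankedSigmaEquiv (fun t => t.nLeaves = n)).symm

/-- `PhyloT`s with a given (tree, rank) predicate form a sigma type over ranked trees. -/
def phyloSigmaEquiv (P : RankedOTree → Prop) :
    {a : PhyloT // P ⟨a.tree, a.rank⟩} ≃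
      Σ y : {y : RankedOTree // P y}, ({p : List Bool // y.1.1.isLf p} ≃ Fin y.1.1.nLeaves) where
  toFun := fun a => ⟨⟨⟨a.1.tree, a.1.rank⟩, a.2⟩, a.1.lab⟩
  invFun := fun x => ⟨⟨x.1.1.1, x.1.1.2, x.2⟩, x.1.2⟩
  left_inv := by rintro ⟨⟨t, r, e⟩, h⟩; rfl
  right_inv := by rintro ⟨⟨⟨t, r⟩, h⟩, e⟩; rfl

instance finitePhylo (n : ℕ) : Finite {a : PhyloT // a.tree.nLeaves = n} :=
  Finite.of_equiv _ (phyloSigmaEquiv (fun y => y.1.nLeaves = n)).symm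

theorem isInt_pmapInv {t : OTree} {σ : List Bool → Bool} {q : List Bool}
    (h : (t.reorient σ).isInt q) : t.isInt (pmapInv σ q) :=
  (isInt_reorient σ t _).mp (by rwa [pmap_pmapInv])

theorem isLf_pmapInv {t : OTree} {σ : List Bool → Bool} {q : List Bool}
    (h : (t.reorient σ).isLf q) : t.isLf (pmapInv σ q) :=
  (isLf_reorient σ t _).mp (by rwa [pmap_pmapInv])

def intPathEquiv (t : OTree) (σ : List Bool → Bool) :
    {p : List Bool // t.isInt p} ≃ {q : List Bool // (t.reorient σ).isInt q} where
  toFun := fun p => ⟨pmap σ p.1, (isInt_reorient σ t p.1).mpr p.2⟩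
  invFun := fun q => ⟨pmapInv σ q.1, isInt_pmapInv q.2⟩
  left_inv := fun p => Subtype.ext (pmapInv_pmap σ p.1)
  right_inv := fun q => Subtype.ext (pmap_pmapInv σ q.1)

def lfPathEquiv (t : OTree) (σ : List Bool → Bool) :
    {p : List Bool // t.isLf p} ≃ {q : List Bool // (t.reorient σ).isLf q} where
  toFun := fun p => ⟨pmap σ p.1, (isLf_reorient σ t p.1).mpr p.2⟩
  invFun := fun q => ⟨pmapInv σ q.1, isLf_pmapInv q.2⟩
  left_inv := fun p => Subtype.ext (pmapInv_pmap σ p.1)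
  right_inv := fun q => Subtype.ext (pmap_pmapInv σ q.1)

theorem pmapInv_injective (σ : List Bool → Bool) : Function.Injective (pmapInv σ) :=
  Function.LeftInverse.injective (pmap_pmapInv σ)

theorem pmapInv_prefix (σ : List Bool → Bool) {p q : List Bool} (h : p <+: q) :
    pmapInv σ p <+: pmapInv σ q := by
  rw [← pmap_sinv, ← pmap_sinv]
  exact pmap_prefix _ h

/-- Transport a ranking along a reorientation. -/
def reorientRk (t : OTree) (σ : List Bool → Bool) (k : Ranking t) :
    Ranking (t.reorient σ) where
  rk := fun q => finCongr (OTree.reorient_nInt σ t).symm (k.rk ((intPathEquiv t σ).symm q))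
  bij := ((finCongr (OTree.reorient_nInt σ t).symm).bijective.comp k.bij).comp
    (intPathEquiv t σ).symm.bijective
  mono := by
    intro p q hpre hne
    have h1 : pmapInv σ p.1 <+: pmapInv σ q.1 := pmapInv_prefix σ hpre
    have h2 : pmapInv σ p.1 ≠ pmapInv σ q.1 := fun h => hne (pmapInv_injective σ h)
    have := k.mono ((intPathEquiv t σ).symm p) ((intPathEquiv t σ).symm q) h1 h2
    rw [Fin.lt_def] at this ⊢
    simp only [finCongr_apply, Fin.coe_cast]
    exact this

/-- Transport leaf labels along a reorientation. -/
def reorientLab (t : OTree) (σ : List Bool → Bool)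
    (e : {p : List Bool // t.isLf p} ≃ Fin t.nLeaves) :
    {q : List Bool // (t.reorient σ).isLf q} ≃ Fin (t.reorient σ).nLeaves :=
  ((lfPathEquiv t σ).symm.trans e).trans (finCongr (OTree.reorient_nLeaves σ t).symm)

def PhyloT.reorientP (σ : List Bool → Bool) (a : PhyloT) : PhyloT :=
  ⟨a.tree.reorient σ, reorientRk a.tree σ a.rank, reorientLab a.tree σ a.lab⟩

theorem phyloRel_reorientP (σ : List Bool → Bool) (a : PhyloT) :
    PhyloRel a (a.reorientP σ) := by
  refine ⟨σ, rfl, ?_, ?_⟩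
  · intro p h
    show ((finCongr _ (a.rank.rk ((intPathEquiv a.tree σ).symm ⟨pmap σ p.1, h⟩)) : Fin _) : ℕ) = _
    have : (intPathEquiv a.tree σ).symm ⟨pmap σ p.1, h⟩ = p :=
      Subtype.ext (pmapInv_pmap σ p.1)
    rw [this]
    rfl
  · intro p h
    show ((finCongr (OTree.reorient_nLeaves σ a.tree).symm
        (a.lab ((lfPathEquiv a.tree σ).symm ⟨pmap σ p.1, h⟩)) : Fin _) : ℕ) = _
    have : (lfPathEquiv a.tree σ).symm ⟨pmap σ p.1, h⟩ = p :=
      Subtype.ext (pmapInv_pmap σ p.1)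
    rw [this]
    rfl

theorem shapeRel_refl (x : RankedOTree) : ShapeRel x x := by
  refine ⟨fun _ => false, (OTree.reorient_const_false x.1).symm, ?_⟩
  intro p h
  have : (⟨pmap (fun _ => false) p.1, h⟩ : {p : List Bool // x.1.isInt p}) = p :=
    Subtype.ext (pmap_const_false p.1)
  rw [this]

theorem shapeRel_symm {x y : RankedOTree} (h : ShapeRel x y) : ShapeRel y x := by
  obtain ⟨σ, hσ, hrk⟩ := h
  refine ⟨sinv σ, by rw [hσ]; exact (reorient_sinv_reorient σ x.1).symm, ?_⟩
  intro q h
  have hq1 : pmap σ (pmap (sinv σ) q.1) = q.1 := by rw [pmap_sinv, pmap_pmapInv]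
  have h2 : y.1.isInt (pmap σ (pmap (sinv σ) q.1)) := by rw [hq1]; exact q.2
  have h3 := hrk ⟨pmap (sinv σ) q.1, h⟩ h2
  rw [← h3]
  exact congrArg (fun z => ((y.2.rk z : Fin _) : ℕ)) (Subtype.ext hq1)

theorem shapeRel_trans {x y z : RankedOTree} (h1 : ShapeRel x y) (h2 : ShapeRel y z) :
    ShapeRel x z := by
  obtain ⟨σ, hσ, hrkσ⟩ := h1
  obtain ⟨τ, hτ, hrkτ⟩ := h2
  refine ⟨rcomp σ τ, by rw [hτ, hσ, reorient_rcomp], ?_⟩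
  intro p h
  have e : pmap τ (pmap σ p.1) = pmap (rcomp σ τ) p.1 := pmap_pmap σ τ p.1
  have hyp : y.1.isInt (pmap σ p.1) := by
    rw [hσ]; exact (isInt_reorient σ x.1 p.1).mpr p.2
  have hz : z.1.isInt (pmap τ (pmap σ p.1)) := by rw [e]; exact h
  calc (z.2.rk ⟨pmap (rcomp σ τ) p.1, h⟩ : ℕ)
      = z.2.rk ⟨pmap τ (pmap σ p.1), hz⟩ := by
        exact congrArg (fun w => ((z.2.rk w : Fin _) : ℕ)) (Subtype.ext e.symm)
    _ = y.2.rk ⟨pmap σ p.1, hyp⟩ := hrkτ ⟨pmap σ p.1, hyp⟩ hz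
    _ = x.2.rk p := hrkσ p hyp

theorem shapeRel_equivalence : Equivalence ShapeRel :=
  ⟨shapeRel_refl, shapeRel_symm, shapeRel_trans⟩

theorem phyloRel_refl (x : PhyloT) : PhyloRel x x := by
  refine ⟨fun _ => false, (OTree.reorient_const_false x.tree).symm, ?_, ?_⟩
  · intro p h
    have : (⟨pmap (fun _ => false) p.1, h⟩ : {p : List Bool // x.tree.isInt p}) = p :=
      Subtype.ext (pmap_const_false p.1)
    rw [this]
  · intro p h
    have : (⟨pmap (fun _ => false) p.1, h⟩ : {p : List Bool // x.tree.isLf p}) = p :=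
      Subtype.ext (pmap_const_false p.1)
    rw [this]

theorem phyloRel_symm {x y : PhyloT} (h : PhyloRel x y) : PhyloRel y x := by
  obtain ⟨σ, hσ, hrk, hlb⟩ := h
  refine ⟨sinv σ, by rw [hσ]; exact (reorient_sinv_reorient σ x.tree).symm, ?_, ?_⟩
  · intro q h
    have hq1 : pmap σ (pmap (sinv σ) q.1) = q.1 := by rw [pmap_sinv, pmap_pmapInv]
    have h2 : y.tree.isInt (pmap σ (pmap (sinv σ) q.1)) := by rw [hq1]; exact q.2
    have h3 := hrk ⟨pmap (sinv σ) q.1, h⟩ h2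
    rw [← h3]
    exact congrArg (fun z => ((y.rank.rk z : Fin _) : ℕ)) (Subtype.ext hq1)
  · intro q h
    have hq1 : pmap σ (pmap (sinv σ) q.1) = q.1 := by rw [pmap_sinv, pmap_pmapInv]
    have h2 : y.tree.isLf (pmap σ (pmap (sinv σ) q.1)) := by rw [hq1]; exact q.2
    have h3 := hlb ⟨pmap (sinv σ) q.1, h⟩ h2
    rw [← h3]
    exact congrArg (fun z => ((y.lab z : Fin _) : ℕ)) (Subtype.ext hq1)

theorem phyloRel_trans {x y z : PhyloT} (h1 : PhyloRel x y) (h2 : PhyloRel y z) :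
    PhyloRel x z := by
  obtain ⟨σ, hσ, hrkσ, hlbσ⟩ := h1
  obtain ⟨τ, hτ, hrkτ, hlbτ⟩ := h2
  refine ⟨rcomp σ τ, by rw [hτ, hσ, reorient_rcomp], ?_, ?_⟩
  · intro p h
    have e : pmap τ (pmap σ p.1) = pmap (rcomp σ τ) p.1 := pmap_pmap σ τ p.1
    have hyp : y.tree.isInt (pmap σ p.1) := by
      rw [hσ]; exact (isInt_reorient σ x.tree p.1).mpr p.2
    have hz : z.tree.isInt (pmap τ (pmap σ p.1)) := by rw [e]; exact h
    calc (z.rank.rk ⟨pmap (rcomp σ τ) p.1, h⟩ : ℕ)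
        = z.rank.rk ⟨pmap τ (pmap σ p.1), hz⟩ := by
          exact congrArg (fun w => ((z.rank.rk w : Fin _) : ℕ)) (Subtype.ext e.symm)
      _ = y.rank.rk ⟨pmap σ p.1, hyp⟩ := hrkτ ⟨pmap σ p.1, hyp⟩ hz
      _ = x.rank.rk p := hrkσ p hyp
  · intro p h
    have e : pmap τ (pmap σ p.1) = pmap (rcomp σ τ) p.1 := pmap_pmap σ τ p.1
    have hyp : y.tree.isLf (pmap σ p.1) := by
      rw [hσ]; exact (isLf_reorient σ x.tree p.1).mpr p.2
    have hz : z.tree.isLf (pmap τ (pmap σ p.1)) := by rw [e]; exact h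
    calc (z.lab ⟨pmap (rcomp σ τ) p.1, h⟩ : ℕ)
        = z.lab ⟨pmap τ (pmap σ p.1), hz⟩ := by
          exact congrArg (fun w => ((z.lab w : Fin _) : ℕ)) (Subtype.ext e.symm)
      _ = y.lab ⟨pmap σ p.1, hyp⟩ := hlbτ ⟨pmap σ p.1, hyp⟩ hz
      _ = x.lab p := hlbσ p hyp

theorem phyloRel_equivalence : Equivalence PhyloRel :=
  ⟨phyloRel_refl, phyloRel_symm, phyloRel_trans⟩

theorem eqvGen_shapeRel (x y : RankedOTree) :
    Relation.EqvGen ShapeRel x y ↔ ShapeRel x y :=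
  Equivalence.eqvGen_iff shapeRel_equivalence

theorem eqvGen_phyloRel (x y : PhyloT) :
    Relation.EqvGen PhyloRel x y ↔ PhyloRel x y :=
  Equivalence.eqvGen_iff phyloRel_equivalence

theorem PhyloT.ext' {a b : PhyloT} (ht : a.tree = b.tree)
    (hr : ∀ (p : List Bool) (h1 : a.tree.isInt p) (h2 : b.tree.isInt p),
      (a.rank.rk ⟨p, h1⟩ : ℕ) = (b.rank.rk ⟨p, h2⟩ : ℕ))
    (hl : ∀ (p : List Bool) (h1 : a.tree.isLf p) (h2 : b.tree.isLf p),
      (a.lab ⟨p, h1⟩ : ℕ) = (b.lab ⟨p, h2⟩ : ℕ)) : a = b := by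
  cases a with | mk ta ra la =>
  cases b with | mk tb rb lb =>
  dsimp at ht
  subst ht
  dsimp at hr hl
  have h1 : ra = rb := Ranking.ext' (funext fun p => Fin.ext (hr p.1 p.2 p.2))
  have h2 : la = lb := Equiv.ext fun p => Fin.ext (hl p.1 p.2 p.2)
  rw [h1, h2]

/-- Two reorientation witnesses relating the same pair agree at internal positions. -/
theorem witness_eq_on_int {a b : PhyloT} {σ τ : List Bool → Bool}
    (hσt : b.tree = a.tree.reorient σ) (hτt : b.tree = a.tree.reorient τ)
    (hσl : ∀ (p : {p : List Bool // a.tree.isLf p}) (h : b.tree.isLf (pmap σ p.1)),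
      (b.lab ⟨pmap σ p.1, h⟩ : ℕ) = (a.lab p : ℕ))
    (hτl : ∀ (p : {p : List Bool // a.tree.isLf p}) (h : b.tree.isLf (pmap τ p.1)),
      (b.lab ⟨pmap τ p.1, h⟩ : ℕ) = (a.lab p : ℕ))
    {q : List Bool} (hq : a.tree.isInt q) : σ q = τ q := by
  obtain ⟨ℓ, hℓ, hpre, hne⟩ := exists_isLf_extend hq
  have h1 : b.tree.isLf (pmap σ ℓ) := by
    rw [hσt]; exact (isLf_reorient σ a.tree ℓ).mpr hℓ
  have h2 : b.tree.isLf (pmap τ ℓ) := by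
    rw [hτt]; exact (isLf_reorient τ a.tree ℓ).mpr hℓ
  have h3 : (b.lab ⟨pmap σ ℓ, h1⟩ : ℕ) = (b.lab ⟨pmap τ ℓ, h2⟩ : ℕ) :=
    (hσl ⟨ℓ, hℓ⟩ h1).trans (hτl ⟨ℓ, hℓ⟩ h2).symm
  have h4 : pmap σ ℓ = pmap τ ℓ :=
    congrArg Subtype.val (b.lab.injective (Fin.ext h3))
  exact eq_of_pmap_eq h4 hpre hne

theorem pmap_congr_int {t : OTree} {σ τ : List Bool → Bool}
    (h : ∀ p, t.isInt p → σ p = τ p) {q : List Bool} (hq : t.isInt q) :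
    pmap σ q = pmap τ q :=
  pmap_congr fun r hpre hne => h r (isInt_of_prefix_isInt hq hpre hne)

theorem pmap_congr_lf {t : OTree} {σ τ : List Bool → Bool}
    (h : ∀ p, t.isInt p → σ p = τ p) {q : List Bool} (hq : t.isLf q) :
    pmap σ q = pmap τ q :=
  pmap_congr fun r hpre hne => h r (isInt_of_prefix_isLf hq hpre hne)

/-- The rank component of `reorientP`. -/
theorem reorientP_rank (σ : List Bool → Bool) (a : PhyloT)
    (p : {p : List Bool // a.tree.isInt p}) (h : (a.reorientP σ).tree.isInt (pmap σ p.1)) :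
    ((a.reorientP σ).rank.rk ⟨pmap σ p.1, h⟩ : ℕ) = (a.rank.rk p : ℕ) := by
  show ((finCongr _ (a.rank.rk ((intPathEquiv a.tree σ).symm ⟨pmap σ p.1, h⟩)) : Fin _) : ℕ) = _
  have : (intPathEquiv a.tree σ).symm ⟨pmap σ p.1, h⟩ = p :=
    Subtype.ext (pmapInv_pmap σ p.1)
  rw [this]
  rfl

theorem reorientP_lab (σ : List Bool → Bool) (a : PhyloT)
    (p : {p : List Bool // a.tree.isLf p}) (h : (a.reorientP σ).tree.isLf (pmap σ p.1)) :
    ((a.reorientP σ).lab ⟨pmap σ p.1, h⟩ : ℕ) = (a.lab p : ℕ) := by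
  show ((finCongr (OTree.reorient_nLeaves σ a.tree).symm
      (a.lab ((lfPathEquiv a.tree σ).symm ⟨pmap σ p.1, h⟩)) : Fin _) : ℕ) = _
  have : (lfPathEquiv a.tree σ).symm ⟨pmap σ p.1, h⟩ = p :=
    Subtype.ext (pmapInv_pmap σ p.1)
  rw [this]
  rfl

open Classical in
noncomputable def sigmaOf (a₀ : PhyloT) (f : {p : List Bool // a₀.tree.isInt p} → Bool) :
    List Bool → Bool :=
  fun p => if h : a₀.tree.isInt p then f ⟨p, h⟩ else false

noncomputable def fiberMap (a₀ : PhyloT) (f : {p : List Bool // a₀.tree.isInt p} → Bool) :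
    {a : PhyloT // PhyloRel a₀ a} :=
  ⟨a₀.reorientP (sigmaOf a₀ f), phyloRel_reorientP _ _⟩

theorem fiberMap_bijective (a₀ : PhyloT) : Function.Bijective (fiberMap a₀) := by
  constructor
  · intro f g h
    have h' : a₀.reorientP (sigmaOf a₀ f) = a₀.reorientP (sigmaOf a₀ g) :=
      congrArg Subtype.val h
    have key : ∀ q, a₀.tree.isInt q → sigmaOf a₀ f q = sigmaOf a₀ g q := by
      intro q hq
      refine witness_eq_on_int (a := a₀) (b := a₀.reorientP (sigmaOf a₀ f))
        (σ := sigmaOf a₀ f) (τ := sigmaOf a₀ g) rfl ?_ (reorientP_lab _ _) ?_ hq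
      · rw [h']; rfl
      · rw [h']; exact reorientP_lab _ _
    funext x
    have := key x.1 x.2
    simpa [sigmaOf, x.2] using this
  · rintro ⟨a, hrel⟩
    obtain ⟨σ, hσt, hrk, hlb⟩ := hrel
    refine ⟨fun x => σ x.1, Subtype.ext ?_⟩
    show PhyloT.reorientP (sigmaOf a₀ (fun x => σ x.1)) a₀ = a
    have hagree : ∀ p, a₀.tree.isInt p → sigmaOf a₀ (fun x => σ x.1) p = σ p := by
      intro p hp
      simp [sigmaOf, hp]
    set σf := sigmaOf a₀ (fun x => σ x.1) with hσf
    have htree : (a₀.reorientP σf).tree = a.tree := by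
      show a₀.tree.reorient σf = a.tree
      rw [reorient_congr hagree, hσt]
    refine PhyloT.ext' htree ?_ ?_
    · intro p h1 h2
      have hq : a₀.tree.isInt (pmapInv σf p) := isInt_pmapInv (t := a₀.tree) (σ := σf) h1
      have hpeq : pmap σf (pmapInv σf p) = p := pmap_pmapInv σf p
      have hps : pmap σ (pmapInv σf p) = p := by
        rw [← pmap_congr_int hagree hq]; exact hpeq
      have h2' : a.tree.isInt (pmap σ (pmapInv σf p)) := by rw [hps]; exact h2
      have hL : ((a₀.reorientP σf).rank.rk ⟨p, h1⟩ : ℕ) =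
          (a₀.rank.rk ⟨pmapInv σf p, hq⟩ : ℕ) := by
        conv_lhs => rw [show (⟨p, h1⟩ : {q : List Bool // (a₀.reorientP σf).tree.isInt q}) =
          ⟨pmap σf (pmapInv σf p), by rw [hpeq]; exact h1⟩ from Subtype.ext hpeq.symm]
        exact reorientP_rank σf a₀ ⟨pmapInv σf p, hq⟩ _
      have hR : (a.rank.rk ⟨p, h2⟩ : ℕ) = (a₀.rank.rk ⟨pmapInv σf p, hq⟩ : ℕ) := by
        conv_lhs => rw [show (⟨p, h2⟩ : {q : List Bool // a.tree.isInt q}) =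
          ⟨pmap σ (pmapInv σf p), h2'⟩ from Subtype.ext hps.symm]
        exact hrk ⟨pmapInv σf p, hq⟩ h2'
      rw [hL, hR]
    · intro p h1 h2
      have hq : a₀.tree.isLf (pmapInv σf p) := isLf_pmapInv (t := a₀.tree) (σ := σf) h1
      have hpeq : pmap σf (pmapInv σf p) = p := pmap_pmapInv σf p
      have hps : pmap σ (pmapInv σf p) = p := by
        rw [← pmap_congr_lf hagree hq]; exact hpeq
      have h2' : a.tree.isLf (pmap σ (pmapInv σf p)) := by rw [hps]; exact h2
      have hL : ((a₀.reorientP σf).lab ⟨p, h1⟩ : ℕ) =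
          (a₀.lab ⟨pmapInv σf p, hq⟩ : ℕ) := by
        conv_lhs => rw [show (⟨p, h1⟩ : {q : List Bool // (a₀.reorientP σf).tree.isLf q}) =
          ⟨pmap σf (pmapInv σf p), by rw [hpeq]; exact h1⟩ from Subtype.ext hpeq.symm]
        exact reorientP_lab σf a₀ ⟨pmapInv σf p, hq⟩ _
      have hR : (a.lab ⟨p, h2⟩ : ℕ) = (a₀.lab ⟨pmapInv σf p, hq⟩ : ℕ) := by
        conv_lhs => rw [show (⟨p, h2⟩ : {q : List Bool // a.tree.isLf q}) =
          ⟨pmap σ (pmapInv σf p), h2'⟩ from Subtype.ext hps.symm]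
        exact hlb ⟨pmapInv σf p, hq⟩ h2'
      rw [hL, hR]

theorem card_orbit (a₀ : PhyloT) :
    Nat.card {a : PhyloT // PhyloRel a₀ a} = 2 ^ a₀.tree.nInt := by
  rw [Nat.card_congr (Equiv.ofBijective _ (fiberMap_bijective a₀)).symm, Nat.card_fun,
    card_int]
  norm_num

open Classical in
theorem card_equiv_nat (α β : Type) [Finite α] [Finite β] (e : α ≃ β) :
    Nat.card (α ≃ β) = (Nat.card α).factorial := by
  have i1 : Fintype α := Fintype.ofFinite α
  have i2 : Fintype β := Fintype.ofFinite β
  have i3 : Fintype (α ≃ β) := Fintype.ofFinite _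
  rw [Nat.card_eq_fintype_card, Nat.card_eq_fintype_card]
  have := Fintype.card_equiv e
  convert this using 2

theorem card_sigma_const (ι : Type) [Finite ι] (f : ι → Type) [∀ i, Finite (f i)]
    (m : ℕ) (h : ∀ i, Nat.card (f i) = m) :
    Nat.card (Σ i, f i) = m * Nat.card ι := by
  have : Fintype ι := Fintype.ofFinite ι
  have : ∀ i, Fintype (f i) := fun i => Fintype.ofFinite _
  rw [Nat.card_eq_fintype_card, Nat.card_eq_fintype_card, Fintype.card_sigma]
  simp only [← Nat.card_eq_fintype_card, h, Finset.sum_const, smul_eq_mul, Finset.card_univ]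
  rw [Nat.card_eq_fintype_card, mul_comm]

theorem finite_rankedP (n : ℕ) (P : RankedOTree → Prop)
    (hP : ∀ y, P y → y.1.nLeaves = n) : Finite {y : RankedOTree // P y} := by
  have : Function.Injective
      (fun y : {y : RankedOTree // P y} =>
        (⟨y.1, hP y.1 y.2⟩ : {y : RankedOTree // y.1.nLeaves = n})) := by
    rintro ⟨y, hy⟩ ⟨z, hz⟩ h
    simpa using congrArg Subtype.val h
  exact Finite.of_injective _ this

theorem finite_phyloQ (n : ℕ) (Q : PhyloT → Prop)
    (hQ : ∀ a, Q a → a.tree.nLeaves = n) : Finite {a : PhyloT // Q a} := by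
  have : Function.Injective
      (fun a : {a : PhyloT // Q a} =>
        (⟨a.1, hQ a.1 a.2⟩ : {a : PhyloT // a.tree.nLeaves = n})) := by
    rintro ⟨y, hy⟩ ⟨z, hz⟩ h
    simpa using congrArg Subtype.val h
  exact Finite.of_injective _ this

/-- Counting lemma A: labeled trees are `n!` times ranked oriented trees. -/
theorem lemA (n : ℕ) (P : RankedOTree → Prop) (hP : ∀ y, P y → y.1.nLeaves = n) :
    Nat.card {a : PhyloT // P ⟨a.tree, a.rank⟩} =
      n.factorial * Nat.card {y : RankedOTree // P y} := by
  haveI : Finite {y : RankedOTree // P y} := finite_rankedP n P hP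
  rw [Nat.card_congr (phyloSigmaEquiv P)]
  refine card_sigma_const _ _ _ ?_
  intro y
  obtain ⟨e⟩ := nonempty_lf_equiv y.1.1
  rw [card_equiv_nat _ _ e, card_lf, hP y.1 y.2]

/-- Counting lemma B: each phylo class contains `2 ^ m` labeled representatives. -/
theorem lemB (m : ℕ) (Q : PhyloT → Prop)
    (hinv : ∀ a b, PhyloRel a b → Q a → Q b)
    (hm : ∀ a, Q a → a.tree.nInt = m) [Finite {a : PhyloT // Q a}] :
    Nat.card {a : PhyloT // Q a} =
      2 ^ m * Nat.card {c : PhyloTree // ∃ a : PhyloT,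
        Quotient.mk (Relation.EqvGen.setoid PhyloRel) a = c ∧ Q a} := by
  set C := {c : PhyloTree // ∃ a : PhyloT,
    Quotient.mk (Relation.EqvGen.setoid PhyloRel) a = c ∧ Q a} with hC
  let F : {a : PhyloT // Q a} → C :=
    fun a => ⟨Quotient.mk (Relation.EqvGen.setoid PhyloRel) a.1, a.1, rfl, a.2⟩
  have hFsurj : Function.Surjective F := by
    rintro ⟨c, a, hmk, hQa⟩
    exact ⟨⟨a, hQa⟩, Subtype.ext hmk⟩
  haveI : Finite C := Finite.of_surjective F hFsurj
  rw [← Nat.card_congr (Equiv.sigmaFiberEquiv F)]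
  refine card_sigma_const _ _ _ ?_
  intro c
  obtain ⟨a₀, hmk, hQ₀⟩ := c.2
  have key : ∀ a : PhyloT,
      (Quotient.mk (Relation.EqvGen.setoid PhyloRel) a = c.1 ↔ PhyloRel a₀ a) := by
    intro a
    rw [← hmk]
    constructor
    · intro h
      exact phyloRel_symm ((eqvGen_phyloRel a a₀).mp (Quotient.exact h))
    · intro h
      exact Quotient.sound (Relation.EqvGen.rel _ _ (phyloRel_symm h))
  have e : {x : {a : PhyloT // Q a} // F x = c} ≃ {a : PhyloT // PhyloRel a₀ a} := by
    refine ⟨fun x => ⟨x.1.1, (key x.1.1).mp (congrArg Subtype.val x.2)⟩,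
      fun a => ⟨⟨a.1, hinv a₀ a.1 a.2 hQ₀⟩, Subtype.ext ((key a.1).mpr a.2)⟩, ?_, ?_⟩
    · rintro ⟨⟨a, hQa⟩, hF⟩; rfl
    · rintro ⟨a, ha⟩; rfl
  rw [Nat.card_congr e, card_orbit a₀, hm a₀ hQ₀]

theorem shapeRel_nLeaves {x y : RankedOTree} (h : ShapeRel x y) :
    y.1.nLeaves = x.1.nLeaves := by
  obtain ⟨σ, hσ, -⟩ := h
  rw [hσ, OTree.reorient_nLeaves]

theorem phyloRel_shapeRel {a b : PhyloT} (h : PhyloRel a b) :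
    ShapeRel (⟨a.tree, a.rank⟩ : RankedOTree) ⟨b.tree, b.rank⟩ := by
  obtain ⟨σ, h1, h2, -⟩ := h
  exact ⟨σ, h1, h2⟩


/-- the uniform distribution on ranked oriented trees with n leaves and the uniform
distribution on ranked phylogenetic trees with n leaves induce the same distribution on ranked
tree shapes (each shape being represented by a ranked oriented tree `x₀` with n leaves). -/
theorem stmt3 (n : ℕ) (hn : 1 ≤ n) (x₀ : RankedOTree) (hx₀ : x₀.1.nLeaves = n) :
    (Nat.card {y : RankedOTree // y.1.nLeaves = n ∧ Relation.EqvGen ShapeRel x₀ y} : ℚ) /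
        (Nat.card {y : RankedOTree // y.1.nLeaves = n})
      = (Nat.card {c : PhyloTree // ∃ a : PhyloT,
            Quotient.mk (Relation.EqvGen.setoid PhyloRel) a = c ∧
            Relation.EqvGen ShapeRel ⟨a.tree, a.rank⟩ x₀} : ℚ) /
        (Nat.card {c : PhyloTree // ∃ a : PhyloT,
            Quotient.mk (Relation.EqvGen.setoid PhyloRel) a = c ∧ a.tree.nLeaves = n}) := by
  classical
  have hP1 : ∀ y : RankedOTree, Relation.EqvGen ShapeRel y x₀ → y.1.nLeaves = n := by
    intro y h
    have h' := (eqvGen_shapeRel y x₀).mp h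
    rw [← hx₀]
    exact (shapeRel_nLeaves h').symm
  have e1 : Nat.card {y : RankedOTree // y.1.nLeaves = n ∧ Relation.EqvGen ShapeRel x₀ y}
      = Nat.card {y : RankedOTree // Relation.EqvGen ShapeRel y x₀} := by
    refine Nat.card_congr (Equiv.subtypeEquivRight fun y => ?_)
    constructor
    · rintro ⟨-, h⟩; exact h.symm
    · intro h; exact ⟨hP1 y h, h.symm⟩
  haveI F1 : Finite {a : PhyloT //
      (fun a : PhyloT => Relation.EqvGen ShapeRel ⟨a.tree, a.rank⟩ x₀) a} :=
    finite_phyloQ n _ (fun a h => hP1 ⟨a.tree, a.rank⟩ h)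
  haveI F2 : Finite {a : PhyloT // (fun a : PhyloT => a.tree.nLeaves = n) a} :=
    finite_phyloQ n _ (fun _ h => h)
  have hinv1 : ∀ a b : PhyloT, PhyloRel a b →
      Relation.EqvGen ShapeRel ⟨a.tree, a.rank⟩ x₀ →
      Relation.EqvGen ShapeRel ⟨b.tree, b.rank⟩ x₀ := by
    intro a b hab ha
    have h1 := (eqvGen_shapeRel _ _).mp ha
    exact (eqvGen_shapeRel _ _).mpr
      (shapeRel_trans (shapeRel_symm (phyloRel_shapeRel hab)) h1)
  have hm1 : ∀ a : PhyloT, Relation.EqvGen ShapeRel ⟨a.tree, a.rank⟩ x₀ →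
      a.tree.nInt = n - 1 := by
    intro a ha
    have h1 : a.tree.nLeaves = n := hP1 ⟨a.tree, a.rank⟩ ha
    have h2 := nLeaves_eq_nInt_add_one a.tree
    omega
  have hinv2 : ∀ a b : PhyloT, PhyloRel a b → a.tree.nLeaves = n → b.tree.nLeaves = n := by
    rintro a b ⟨σ, h1, -⟩ ha
    rw [h1, OTree.reorient_nLeaves]
    exact ha
  have hm2 : ∀ a : PhyloT, a.tree.nLeaves = n → a.tree.nInt = n - 1 := by
    intro a ha
    have h2 := nLeaves_eq_nInt_add_one a.tree
    omega
  have key1 : n.factorial * Nat.card {y : RankedOTree // Relation.EqvGen ShapeRel y x₀}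
      = 2 ^ (n - 1) * Nat.card {c : PhyloTree // ∃ a : PhyloT,
          Quotient.mk (Relation.EqvGen.setoid PhyloRel) a = c ∧
          Relation.EqvGen ShapeRel ⟨a.tree, a.rank⟩ x₀} := by
    have hA1 := lemA n (fun y => Relation.EqvGen ShapeRel y x₀) hP1
    have hB1 := lemB (n - 1) (fun a : PhyloT => Relation.EqvGen ShapeRel ⟨a.tree, a.rank⟩ x₀)
      hinv1 hm1
    exact hA1.symm.trans hB1
  have key2 : n.factorial * Nat.card {y : RankedOTree // y.1.nLeaves = n}
      = 2 ^ (n - 1) * Nat.card {c : PhyloTree // ∃ a : PhyloT,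
          Quotient.mk (Relation.EqvGen.setoid PhyloRel) a = c ∧ a.tree.nLeaves = n} := by
    have hA2 := lemA n (fun y : RankedOTree => y.1.nLeaves = n) (fun _ h => h)
    have hB2 := lemB (n - 1) (fun a : PhyloT => a.tree.nLeaves = n) hinv2 hm2
    exact hA2.symm.trans hB2
  rw [e1]
  have hfac : ((n.factorial : ℚ)) ≠ 0 := by
    exact_mod_cast n.factorial_ne_zero
  have hpow : ((2 ^ (n - 1) : ℚ)) ≠ 0 := by positivity
  calc (Nat.card {y : RankedOTree // Relation.EqvGen ShapeRel y x₀} : ℚ) /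
        (Nat.card {y : RankedOTree // y.1.nLeaves = n})
      = ((n.factorial : ℚ) * Nat.card {y : RankedOTree // Relation.EqvGen ShapeRel y x₀}) /
        ((n.factorial : ℚ) * Nat.card {y : RankedOTree // y.1.nLeaves = n}) :=
        (mul_div_mul_left _ _ hfac).symm
    _ = ((2 ^ (n - 1) : ℚ) * Nat.card {c : PhyloTree // ∃ a : PhyloT,
            Quotient.mk (Relation.EqvGen.setoid PhyloRel) a = c ∧
            Relation.EqvGen ShapeRel ⟨a.tree, a.rank⟩ x₀}) /
        ((2 ^ (n - 1) : ℚ) * Nat.card {c : PhyloTree // ∃ a : PhyloT,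
            Quotient.mk (Relation.EqvGen.setoid PhyloRel) a = c ∧ a.tree.nLeaves = n}) := by
        rw [show ((n.factorial : ℚ) *
            Nat.card {y : RankedOTree // Relation.EqvGen ShapeRel y x₀}) =
            ((2 ^ (n - 1) : ℚ) * Nat.card {c : PhyloTree // ∃ a : PhyloT,
              Quotient.mk (Relation.EqvGen.setoid PhyloRel) a = c ∧
              Relation.EqvGen ShapeRel ⟨a.tree, a.rank⟩ x₀}) by exact_mod_cast key1,
          show ((n.factorial : ℚ) * Nat.card {y : RankedOTree // y.1.nLeaves = n}) =
            ((2 ^ (n - 1) : ℚ) * Nat.card {c : PhyloTree // ∃ a : PhyloT,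
              Quotient.mk (Relation.EqvGen.setoid PhyloRel) a = c ∧ a.tree.nLeaves = n}) by
            exact_mod_cast key2]
    _ = _ := mul_div_mul_left _ _ hpow
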